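/- Define Laurent polynomials Δ_k recursively by Δ_0 = 0, Δ_1 = F_{p_1}, and Δ_k = (q_{k-1}(u₁-1)(u₂-1)F_{p_k} + 1)Δ_{k-1} + (u₁u₂)^{p_{k-1}} (F_{p_k}/F_{p_{k-1}}) (Δ_{k-1} - Δ_{k-2}), where p_i, q_i are nonzero integers. Then for all n ≥ 1 and all t > n-1, the diagonal part Δ_n^[t] is zero, and moreover Δ_n^[n-1] = (∏_{i=1}^{n-1} q_i) · (-u₁)^{n-1} · ∏_{i=1}^{n} F_{p_i}. -/

import Mathlib

open Finset

noncomputable section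

/-- Laurent polynomials in two variables `u₁, u₂` over `ℤ`. -/
abbrev L2 := AddMonoidAlgebra ℤ (ℤ × ℤ)

/-- The monomial `u₁^r * u₂^s`. -/
def mono (r s : ℤ) : L2 := AddMonoidAlgebra.single (r, s) 1

/-- The `i`-th diagonal part `P^[i]`: the sum of all monomials `a·u₁^r·u₂^s` of `P`
with `r - s = i`. -/
def diag (P : L2) (i : ℤ) : L2 := AddMonoidAlgebra.ofCoeff (Finsupp.filter (fun p => p.1 - p.2 = i) P.coeff)

/-- `F r = Σ_{i=0}^{r-1} (u₁u₂)^i` for `r > 0`, `F 0 = 0`,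
`F r = -Σ_{i=r}^{-1} (u₁u₂)^i` for `r < 0`. -/
def F (r : ℤ) : L2 :=
  if 0 < r then ∑ i ∈ range r.toNat, mono i i
  else -∑ i ∈ range (-r).toNat, mono (-(i : ℤ) - 1) (-(i : ℤ) - 1)

open scoped Pointwise

def Hom (P : L2) (d : ℤ) : Prop := ∀ x ∈ P.coeff.support, x.1 - x.2 = d

def Bdd (P : L2) (d : ℤ) : Prop := ∀ x ∈ P.coeff.support, x.1 - x.2 ≤ d

lemma diag_apply (P : L2) (t : ℤ) (x : ℤ × ℤ) :
    (diag P t).coeff x = if x.1 - x.2 = t then P.coeff x else 0 := Finsupp.filter_apply _ _ _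

lemma diag_add (P Q : L2) (t : ℤ) : diag (P + Q) t = diag P t + diag Q t :=
  congrArg AddMonoidAlgebra.ofCoeff Finsupp.filter_add

/-- `diag · t` as an additive monoid hom. -/
def diagHom (t : ℤ) : L2 →+ L2 where
  toFun P := diag P t
  map_zero' := by
    ext x
    rw [diag_apply]
    split <;> rfl
  map_add' P Q := diag_add P Q t

lemma diag_neg (P : L2) (t : ℤ) : diag (-P) t = -diag P t := map_neg (diagHom t) P

lemma diag_sub (P Q : L2) (t : ℤ) : diag (P - Q) t = diag P t - diag Q t :=
  map_sub (diagHom t) P Q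

lemma diag_smul (z : ℤ) (P : L2) (t : ℤ) : diag (z • P) t = z • diag P t :=
  map_zsmul (diagHom t) z P

lemma diag_eq_zero_of {P : L2} {t : ℤ} (h : ∀ x ∈ P.coeff.support, x.1 - x.2 ≠ t) :
    diag P t = 0 := by
  ext x
  simp only [diag_apply, AddMonoidAlgebra.coeff_zero, Finsupp.coe_zero, Pi.zero_apply]
  split
  · rename_i hx
    by_contra hPx
    exact h x (Finsupp.mem_support_iff.2 hPx) hx
  · rfl

lemma Hom.diag_eq {P : L2} {d : ℤ} (h : Hom P d) : diag P d = P := by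
  ext x
  simp only [diag_apply]
  split
  · rfl
  · rename_i hx
    by_contra hPx
    exact hx (h x (Finsupp.mem_support_iff.2 fun h0 => hPx h0.symm))

lemma Bdd.diag_eq_zero {P : L2} {d t : ℤ} (h : Bdd P d) (ht : d < t) : diag P t = 0 :=
  diag_eq_zero_of fun x hx => by have := h x hx; omega

lemma Hom.bdd {P : L2} {d : ℤ} (h : Hom P d) : Bdd P d := fun x hx => (h x hx).le

lemma Bdd.mono_le {P : L2} {d e : ℤ} (h : Bdd P d) (hde : d ≤ e) : Bdd P e :=
  fun x hx => (h x hx).trans hde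

lemma bdd_of_diag {P : L2} {d : ℤ} (h : ∀ t, d < t → diag P t = 0) : Bdd P d := by
  intro x hx
  by_contra hlt
  push_neg at hlt
  have h0 := h _ hlt
  have h1 : (diag P (x.1 - x.2)).coeff x = 0 := by rw [h0]; rfl
  rw [diag_apply, if_pos rfl] at h1
  exact Finsupp.mem_support_iff.1 hx h1

lemma hom_zero (d : ℤ) : Hom 0 d := by intro x hx; simp at hx

lemma bdd_zero (d : ℤ) : Bdd 0 d := (hom_zero d).bdd

lemma hom_diag (P : L2) (t : ℤ) : Hom (diag P t) t := by
  intro x hx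
  have hx' : x ∈ P.coeff.support.filter (fun x : ℤ × ℤ => x.1 - x.2 = t) := by
    rw [← Finsupp.support_filter]
    exact hx
  exact (Finset.mem_filter.1 hx').2

lemma Hom.mul {P Q : L2} {a b : ℤ} (hP : Hom P a) (hQ : Hom Q b) : Hom (P * Q) (a + b) := by
  intro x hx
  obtain ⟨y, hy, z, hz, rfl⟩ := Finset.mem_add.1 (AddMonoidAlgebra.support_coeff_mul_subset P Q hx)
  have h1 := hP y hy
  have h2 := hQ z hz
  have h3 : (y + z).1 = y.1 + z.1 ∧ (y + z).2 = y.2 + z.2 := ⟨rfl, rfl⟩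
  omega

lemma Bdd.mul {P Q : L2} {a b : ℤ} (hP : Bdd P a) (hQ : Bdd Q b) : Bdd (P * Q) (a + b) := by
  intro x hx
  obtain ⟨y, hy, z, hz, rfl⟩ := Finset.mem_add.1 (AddMonoidAlgebra.support_coeff_mul_subset P Q hx)
  have h1 := hP y hy
  have h2 := hQ z hz
  have h3 : (y + z).1 = y.1 + z.1 ∧ (y + z).2 = y.2 + z.2 := ⟨rfl, rfl⟩
  omega

lemma hom_mono (r s : ℤ) : Hom (mono r s) (r - s) := by
  intro x hx
  have h := Finsupp.support_single_subset hx
  simp only [Finset.mem_singleton] at h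
  subst h
  rfl

lemma hom_one : Hom (1 : L2) 0 := by
  have h : (1 : L2) = mono 0 0 := rfl
  rw [h]
  simpa using hom_mono 0 0

lemma hom_sum {α : Type*} {s : Finset α} {f : α → L2} {d : ℤ}
    (h : ∀ i ∈ s, Hom (f i) d) : Hom (∑ i ∈ s, f i) d := by
  classical
  intro x hx
  rw [AddMonoidAlgebra.coeff_sum] at hx
  obtain ⟨i, hi, hxi⟩ := Finset.mem_biUnion.1 (Finsupp.support_finset_sum hx)
  exact h i hi x hxi

lemma Hom.neg {P : L2} {d : ℤ} (hP : Hom P d) : Hom (-P) d := by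
  intro x hx
  rw [AddMonoidAlgebra.coeff_neg, Finsupp.support_neg] at hx
  exact hP x hx

lemma hom_F (r : ℤ) : Hom (F r) 0 := by
  unfold F
  split
  · exact hom_sum fun i _ => by simpa using hom_mono (i : ℤ) (i : ℤ)
  · exact Hom.neg (hom_sum fun i _ => by simpa using hom_mono (-(i : ℤ) - 1) (-(i : ℤ) - 1))

lemma mono_apply (r s : ℤ) (x : ℤ × ℤ) : (mono r s).coeff x = if (r, s) = x then 1 else 0 := by
  rw [show (mono r s).coeff = Finsupp.single ((r, s) : ℤ × ℤ) (1 : ℤ) from rfl, Finsupp.single_apply]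

lemma F_ne_zero {r : ℤ} (hr : r ≠ 0) : F r ≠ 0 := by
  rcases lt_or_gt_of_ne hr with h | h
  · intro hF
    have h1 : (F r).coeff (-1, -1) = 0 := by rw [hF]; rfl
    rw [F, if_neg (by omega)] at h1
    have h2 : (∑ i ∈ range (-r).toNat, mono (-(i : ℤ) - 1) (-(i : ℤ) - 1)).coeff (-1, -1) = 1 := by
      rw [AddMonoidAlgebra.coeff_sum, Finsupp.finset_sum_apply, Finset.sum_eq_single 0]
      · rw [mono_apply]; norm_num
      · intro b _ hb0
        rw [mono_apply, if_neg]
        intro hc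
        rw [Prod.mk.injEq] at hc
        omega
      · intro h0
        exact absurd (Finset.mem_range.2 (by omega)) h0
    rw [AddMonoidAlgebra.coeff_neg, Finsupp.neg_apply, h2] at h1
    norm_num at h1
  · intro hF
    have h1 : (F r).coeff (0, 0) = 0 := by rw [hF]; rfl
    rw [F, if_pos h] at h1
    have h2 : (∑ i ∈ range r.toNat, mono (i : ℤ) (i : ℤ)).coeff (0, 0) = 1 := by
      rw [AddMonoidAlgebra.coeff_sum, Finsupp.finset_sum_apply, Finset.sum_eq_single 0]
      · rw [mono_apply]; norm_num
      · intro b _ hb0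
        rw [mono_apply, if_neg]
        intro hc
        rw [Prod.mk.injEq] at hc
        omega
      · intro h0
        exact absurd (Finset.mem_range.2 (by omega)) h0
    exact absurd (h2.symm.trans h1) one_ne_zero

lemma Hom.diag_mul {P : L2} {a : ℤ} (h : Hom P a) (Q : L2) (t : ℤ) :
    diag (P * Q) t = P * diag Q (t - a) := by
  set Q' : L2 := Q - diag Q (t - a) with hQ'def
  have hQ'supp : ∀ x ∈ Q'.coeff.support, ¬(x.1 - x.2 = t - a) := by
    intro x hx hc
    apply Finsupp.mem_support_iff.1 hx
    have : Q'.coeff x = Q.coeff x - (diag Q (t - a)).coeff x := rfl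
    rw [this, diag_apply, if_pos hc, sub_self]
  have hsplit : Q = diag Q (t - a) + Q' := by rw [hQ'def]; ring
  have h1 : diag (P * diag Q (t - a)) t = P * diag Q (t - a) := by
    have h1' := (h.mul (hom_diag Q (t - a))).diag_eq
    rwa [show a + (t - a) = t by ring] at h1'
  have h2 : diag (P * Q') t = 0 := by
    apply diag_eq_zero_of
    intro x hx
    obtain ⟨y, hy, z, hz, rfl⟩ := Finset.mem_add.1 (AddMonoidAlgebra.support_coeff_mul_subset P Q' hx)
    have hdy := h y hy
    have hdz := hQ'supp z hz
    have h3 : (y + z).1 = y.1 + z.1 ∧ (y + z).2 = y.2 + z.2 := ⟨rfl, rfl⟩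
    omega
  conv_lhs => rw [hsplit]
  rw [mul_add, diag_add, h1, h2, add_zero]

lemma mono_mul_mono (r s r' s' : ℤ) : mono r s * mono r' s' = mono (r + r') (s + s') := by
  simp [mono, AddMonoidAlgebra.single_mul_single]
/-- For the recursively defined `Δ_k` (recursion stated with denominators cleared:
`F_{p_{k-1}} · Δ_k = (q_{k-1}(u₁-1)(u₂-1)F_{p_k}+1) · F_{p_{k-1}} · Δ_{k-1}
  + (u₁u₂)^{p_{k-1}} F_{p_k} (Δ_{k-1} - Δ_{k-2})`),
the diagonal parts `Δ_n^[t]` vanish for `t > n-1`, and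
`Δ_n^[n-1] = (∏_{i=1}^{n-1} q_i) · (-u₁)^{n-1} · ∏_{i=1}^{n} F_{p_i}`. -/
theorem diag_Delta_top (n : ℕ) (hn : 1 ≤ n) (p q : ℕ → ℤ)
    (hp : ∀ i, 1 ≤ i → i ≤ n → p i ≠ 0) (hq : ∀ i, 1 ≤ i → i ≤ n - 1 → q i ≠ 0)
    (Δ : ℕ → L2) (h0 : Δ 0 = 0) (h1 : Δ 1 = F (p 1))
    (hrec : ∀ k, 2 ≤ k → k ≤ n →
      F (p (k - 1)) * Δ k =
        (q (k - 1) • ((mono 1 0 - 1) * (mono 0 1 - 1)) * F (p k) + 1) *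
            (F (p (k - 1)) * Δ (k - 1))
          + mono (p (k - 1)) (p (k - 1)) * F (p k) * (Δ (k - 1) - Δ (k - 2))) :
    (∀ t : ℤ, (n : ℤ) - 1 < t → diag (Δ n) t = 0) ∧
    diag (Δ n) ((n : ℤ) - 1) =
      (∏ i ∈ Icc 1 (n - 1), q i) •
        ((-(mono 1 0)) ^ (n - 1) * ∏ i ∈ Icc 1 n, F (p i)) := by
  have key : ∀ k, 1 ≤ k → k ≤ n →
      Bdd (Δ k) ((k : ℤ) - 1) ∧
      diag (Δ k) ((k : ℤ) - 1) =
        (∏ i ∈ Icc 1 (k - 1), q i) •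
          ((-(mono 1 0)) ^ (k - 1) * ∏ i ∈ Icc 1 k, F (p i)) := by
    intro k
    induction k using Nat.strong_induction_on with
    | _ k ih =>
      intro hk1 hkn
      rcases eq_or_lt_of_le hk1 with hk | hk2
      · -- base case k = 1
        subst hk
        constructor
        · rw [h1]
          exact ((hom_F (p 1)).bdd).mono_le (by norm_num)
        · rw [h1, show ((1 : ℕ) : ℤ) - 1 = 0 by norm_num, (hom_F (p 1)).diag_eq,
            show (1 : ℕ) - 1 = 0 from rfl,
            show (Icc 1 0 : Finset ℕ) = ∅ from Finset.Icc_eq_empty (by omega)]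
          simp
      · -- inductive step: k = j + 2
        obtain ⟨j, rfl⟩ : ∃ j, k = j + 2 := ⟨k - 2, by omega⟩
        have IH1 := ih (j + 1) (by omega) (by omega) (by omega)
        have hB1 : Bdd (Δ (j + 1)) ((j : ℤ)) := by
          have h := IH1.1
          rwa [show ((j + 1 : ℕ) : ℤ) - 1 = (j : ℤ) by push_cast; ring] at h
        have hD1 : diag (Δ (j + 1)) ((j : ℤ)) =
            (∏ i ∈ Icc 1 j, q i) • ((-(mono 1 0)) ^ j * ∏ i ∈ Icc 1 (j + 1), F (p i)) := by
          have h := IH1.2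
          rwa [show ((j + 1 : ℕ) : ℤ) - 1 = (j : ℤ) by push_cast; ring,
            Nat.add_sub_cancel] at h
        have hB0 : Bdd (Δ j) ((j : ℤ)) := by
          rcases Nat.eq_zero_or_pos j with hj | hj
          · subst hj; rw [h0]; exact bdd_zero 0
          · exact ((ih j (by omega) (by omega) (by omega)).1).mono_le (by omega)
        have hrec' := hrec (j + 2) (by omega) hkn
        rw [show j + 2 - 1 = j + 1 by omega, show j + 2 - 2 = j by omega] at hrec'
        set A := F (p (j + 1)) with hA
        set B := F (p (j + 2)) with hB
        set u := mono 1 0 with hu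
        set v := mono 0 1 with hv
        set m := mono (p (j + 1)) (p (j + 1)) with hm
        have hHA : Hom A 0 := hom_F _
        have hHB : Hom B 0 := hom_F _
        have hAne : A ≠ 0 := F_ne_zero (hp (j + 1) (by omega) (by omega))
        have huv : u * v = mono 1 1 := by rw [hu, hv, mono_mul_mono]; norm_num
        have hH11 : Hom (mono 1 1) 0 := by simpa using hom_mono 1 1
        have hHu : Hom u 1 := by rw [hu]; simpa using hom_mono 1 0
        have hHv : Hom v (-1) := by rw [hv]; simpa using hom_mono 0 1
        have hHm : Hom m 0 := by rw [hm]; simpa using hom_mono (p (j + 1)) (p (j + 1))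
        have expand : A * Δ (j + 2) =
            q (j + 1) • (mono 1 1 * (B * (A * Δ (j + 1))))
              - q (j + 1) • (u * (B * (A * Δ (j + 1))))
              - q (j + 1) • (v * (B * (A * Δ (j + 1))))
              + q (j + 1) • (B * (A * Δ (j + 1)))
              + A * Δ (j + 1) + m * (B * (Δ (j + 1) - Δ j)) := by
          rw [hrec', ← huv]
          simp only [zsmul_eq_mul]
          ring
        have hdiag : ∀ t : ℤ,
            diag (A * Δ (j + 2)) t =
              q (j + 1) • (mono 1 1 * (B * (A * diag (Δ (j + 1)) t)))
                - q (j + 1) • (u * (B * (A * diag (Δ (j + 1)) (t - 1))))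
                - q (j + 1) • (v * (B * (A * diag (Δ (j + 1)) (t + 1))))
                + q (j + 1) • (B * (A * diag (Δ (j + 1)) t))
                + A * diag (Δ (j + 1)) t
                + m * (B * (diag (Δ (j + 1)) t - diag (Δ j) t)) := by
          intro t
          rw [expand]
          simp only [diag_add, diag_sub, diag_smul, hH11.diag_mul, hHu.diag_mul,
            hHv.diag_mul, hHm.diag_mul, hHB.diag_mul, hHA.diag_mul, sub_zero,
            sub_neg_eq_add]
        have hvanish : ∀ t : ℤ, ((j : ℤ) + 1) < t → diag (Δ (j + 2)) t = 0 := by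
          intro t ht
          have e1 : diag (Δ (j + 1)) t = 0 := hB1.diag_eq_zero (by omega)
          have e2 : diag (Δ (j + 1)) (t - 1) = 0 := hB1.diag_eq_zero (by omega)
          have e3 : diag (Δ (j + 1)) (t + 1) = 0 := hB1.diag_eq_zero (by omega)
          have e4 : diag (Δ j) t = 0 := hB0.diag_eq_zero (by omega)
          have hz : diag (A * Δ (j + 2)) t = 0 := by
            rw [hdiag t, e1, e2, e3, e4]
            simp
          rw [hHA.diag_mul, sub_zero] at hz
          exact mul_left_cancel₀ hAne (hz.trans (mul_zero A).symm)
        constructor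
        · apply bdd_of_diag
          intro t ht
          apply hvanish
          push_cast at ht ⊢
          omega
        · have e1 : diag (Δ (j + 1)) ((j : ℤ) + 1) = 0 := hB1.diag_eq_zero (by omega)
          have e3 : diag (Δ (j + 1)) (((j : ℤ) + 1) + 1) = 0 := hB1.diag_eq_zero (by omega)
          have e4 : diag (Δ j) ((j : ℤ) + 1) = 0 := hB0.diag_eq_zero (by omega)
          have hz := hdiag ((j : ℤ) + 1)
          rw [e1, e3, e4, show ((j : ℤ) + 1) - 1 = (j : ℤ) by ring, hD1] at hz
          simp only [mul_zero, zero_mul, smul_zero, zero_add, add_zero, sub_zero,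
            zero_sub, sub_self] at hz
          rw [hHA.diag_mul, sub_zero] at hz
          have goalA : A * ((∏ i ∈ Icc 1 (j + 1), q i) •
              ((-u) ^ (j + 1) * ∏ i ∈ Icc 1 (j + 2), F (p i))) =
              -(q (j + 1) • (u * (B * (A * ((∏ i ∈ Icc 1 j, q i) •
                ((-u) ^ j * ∏ i ∈ Icc 1 (j + 1), F (p i))))))) := by
            rw [Finset.prod_Icc_succ_top (by omega) q,
              Finset.prod_Icc_succ_top (by omega) (fun i => F (p i)), pow_succ]
            rw [← hB]
            simp only [zsmul_eq_mul, Int.cast_mul]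
            ring
          have hfin : diag (Δ (j + 2)) ((j : ℤ) + 1) =
              (∏ i ∈ Icc 1 (j + 1), q i) •
                ((-u) ^ (j + 1) * ∏ i ∈ Icc 1 (j + 2), F (p i)) :=
            mul_left_cancel₀ hAne (hz.trans goalA.symm)
          rw [show ((j + 2 : ℕ) : ℤ) - 1 = (j : ℤ) + 1 by push_cast; ring,
            show j + 2 - 1 = j + 1 by omega]
          exact hfin
  obtain ⟨hBdd, hD⟩ := key n hn le_rfl
  exact ⟨fun t ht => hBdd.diag_eq_zero ht, hD⟩

end
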